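/- If p(x) is a polynomial set map of binomial type and L, M are linear functionals on K[x], then LM p(x) = (L p(x)) · (M p(x)) as set maps, i.e., (LM) p_S(x) = ∑_{T ⊎ U = S} (L p_T(x))(M p_U(x)) for each finite S. -/

import Mathlib

open scoped Classical
open Polynomial

noncomputable section

/-- A polynomial set map is of binomial type if
`p_S(x+y) = ∑_{T ⊎ U = S} p_T(x) p_U(y)`. -/
def BinomialType {V K : Type*} [DecidableEq V] [Field K] [CharZero K]
    (p : Finset V → Polynomial K) : Prop :=
  ∀ S : Finset V, ∀ x y : K,
    (p S).eval (x + y) = ∑ T ∈ S.powerset, (p T).eval x * (p (S \ T)).eval y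

/-- The umbral product of two functionals, defined on monomials by
`LM x^n = ∑_{k=0}^n (n choose k) (L x^k)(M x^{n-k})` and extended linearly. -/
def umbralMul {K : Type*} [Field K] (L M : Polynomial K → K) : Polynomial K → K :=
  fun f => ∑ n ∈ f.support, f.coeff n *
    ∑ k ∈ Finset.range (n + 1), (n.choose k : K) * L (X ^ k) * M (X ^ (n - k))

section Aux


variable {K : Type*} [Field K] (L M : Polynomial K →ₗ[K] K)

/-- The constant `∑ k C(n,k) L(X^k) M(X^{n-k})`. -/
def umbC (n : ℕ) : K :=
  ∑ k ∈ Finset.range (n + 1), (n.choose k : K) * L (X ^ k) * M (X ^ (n - k))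

/-- Apply `L` to coefficients and `M` to `X^n` on the outer variable. -/
def Psi (q : Polynomial (Polynomial K)) : K := q.sum (fun n a => L a * M (X ^ n))

lemma Psi_zero : Psi L M 0 = 0 := Polynomial.sum_zero_index _

lemma Psi_add (q r : Polynomial (Polynomial K)) :
    Psi L M (q + r) = Psi L M q + Psi L M r :=
  Polynomial.sum_add_index q r _ (fun n => by simp) (fun n a b => by rw [map_add, add_mul])

lemma Psi_sum {ι : Type*} (s : Finset ι) (f : ι → Polynomial (Polynomial K)) :
    Psi L M (∑ i ∈ s, f i) = ∑ i ∈ s, Psi L M (f i) := by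
  classical
  induction s using Finset.induction_on with
  | empty => simp [Psi_zero]
  | insert _ _ h ih => rw [Finset.sum_insert h, Finset.sum_insert h, Psi_add, ih]

lemma Psi_monomial (n : ℕ) (a : Polynomial K) :
    Psi L M (monomial n a) = L a * M (X ^ n) :=
  Polynomial.sum_monomial_index a _ (by simp)

lemma Psi_C_mul_map (f g : Polynomial K) :
    Psi L M (C f * g.map C) = L f * M g := by
  induction g using Polynomial.induction_on' with
  | add p q hp hq => rw [Polynomial.map_add, mul_add, Psi_add, hp, hq, map_add, mul_add]
  | monomial n a =>
      rw [Polynomial.map_monomial, C_mul_monomial, Psi_monomial,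
        ← C_mul_X_pow_eq_monomial, ← smul_eq_C_mul, map_smul, mul_comm f,
        ← smul_eq_C_mul, map_smul]
      simp [mul_assoc, mul_left_comm]

lemma umbral_add (f g : Polynomial K) :
    umbralMul (⇑L) (⇑M) (f + g) = umbralMul (⇑L) (⇑M) f + umbralMul (⇑L) (⇑M) g := by
  show (f + g).sum (fun n a => a * umbC L M n) =
    f.sum (fun n a => a * umbC L M n) + g.sum (fun n a => a * umbC L M n)
  exact Polynomial.sum_add_index f g _ (fun n => zero_mul _) (fun n a b => add_mul a b _)

lemma umbral_monomial (n : ℕ) (a : K) :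
    umbralMul (⇑L) (⇑M) (monomial n a) = a * umbC L M n := by
  show (monomial n a).sum (fun n a => a * umbC L M n) = a * umbC L M n
  exact Polynomial.sum_monomial_index a _ (zero_mul _)

lemma Psi_aeval (f : Polynomial K) :
    Psi L M (aeval (C X + X : Polynomial (Polynomial K)) f) = umbralMul (⇑L) (⇑M) f := by
  induction f using Polynomial.induction_on' with
  | add p q hp hq => rw [map_add, Psi_add, hp, hq, umbral_add]
  | monomial n a =>
      rw [umbral_monomial, aeval_monomial, add_pow, Finset.mul_sum, Psi_sum, umbC,
        Finset.mul_sum]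
      refine Finset.sum_congr rfl fun k hk => ?_
      have : (algebraMap K (Polynomial (Polynomial K))) a *
          ((C X : Polynomial (Polynomial K)) ^ k * X ^ (n - k) *
            (n.choose k : Polynomial (Polynomial K))) =
          monomial (n - k) ((a * n.choose k) • X ^ k) := by
        rw [← C_mul_X_pow_eq_monomial, smul_eq_C_mul, Polynomial.algebraMap_apply, algebraMap_eq,
          ← map_natCast (C : Polynomial K →+* Polynomial (Polynomial K)) (n.choose k),
          ← map_natCast (C : K →+* Polynomial K) (n.choose k)]
        simp only [map_mul, map_pow]
        ring
      rw [this, Psi_monomial, map_smul]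
      simp [mul_assoc, mul_left_comm, mul_comm]


variable {K : Type*} [Field K] [CharZero K]

omit [CharZero K] in
lemma eval_eval_aeval (r : Polynomial K) (x : K) (f : Polynomial K) :
    eval x (eval r (aeval (C X + X : Polynomial (Polynomial K)) f)) =
      f.eval (x + r.eval x) := by
  have h1 : eval r (aeval (C X + X : Polynomial (Polynomial K)) f) =
      eval₂ C (X + r) f := by
    rw [aeval_def, ← coe_evalRingHom, hom_eval₂]
    congr 1
    · exact RingHom.ext fun a => by
        simp [Polynomial.algebraMap_apply, algebraMap_eq]
    · simp
  rw [h1, ← coe_evalRingHom, hom_eval₂]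
  have h2 : (evalRingHom x).comp (C : K →+* Polynomial K) = RingHom.id K :=
    RingHom.ext fun a => by simp
  rw [h2]
  simp

lemma keyIdentity {V : Type*} [DecidableEq V] (p : Finset V → Polynomial K)
    (hp : BinomialType p) (S : Finset V) :
    aeval (C X + X : Polynomial (Polynomial K)) (p S) =
      ∑ T ∈ S.powerset, C (p T) * (p (S \ T)).map C := by
  apply Polynomial.funext
  intro r
  apply Polynomial.funext
  intro x
  rw [eval_eval_aeval, hp S x (r.eval x), eval_finset_sum, eval_finset_sum]
  refine Finset.sum_congr rfl fun T _ => ?_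
  rw [eval_mul, eval_C, eval_mul, eval_map, ← coe_evalRingHom, hom_eval₂]
  have h2 : (evalRingHom x).comp (C : K →+* Polynomial K) = RingHom.id K :=
    RingHom.ext fun a => by simp
  rw [h2, coe_evalRingHom]
  simp

end Aux

/-- For a polynomial set map of binomial type, `LM p(x) = (L p(x))·(M p(x))`
as set maps. -/
theorem umbralMul_apply_binomialType {V K : Type*} [DecidableEq V] [Field K]
    [CharZero K] (p : Finset V → Polynomial K) (hp : BinomialType p)
    (L M : Polynomial K →ₗ[K] K) :
    ∀ S : Finset V,
      umbralMul (⇑L) (⇑M) (p S) = ∑ T ∈ S.powerset, L (p T) * M (p (S \ T)) := by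
  intro S
  rw [← Psi_aeval L M (p S), keyIdentity p hp S, Psi_sum]
  exact Finset.sum_congr rfl fun T _ => Psi_C_mul_map L M _ _
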